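/- Let R be an associative ring with unity and M a left R-module. Then M is strongly two-degree Ding projective if and only if there is a short exact sequence 0 → M → D → M → 0 with D Ding projective such that Hom_R(−, F) leaves this short exact sequence exact for every flat left R-module F. -/

import Mathlib

universe u

open scoped TensorProduct DirectSum

/-- The subgroup of `E ⊗[ℤ] F` by which one quotients to obtain the balanced tensor
product `E ⊗_R F` of a right `R`-module `E` and a left `R`-module `F`. -/
def balancedSub (R : Type u) [Ring R] (E F : Type u) [AddCommGroup E] [Module Rᵐᵒᵖ E]
    [AddCommGroup F] [Module R F] : Submodule ℤ (TensorProduct ℤ E F) :=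
  Submodule.span ℤ
    {x | ∃ (r : R) (e : E) (f : F),
      x = (MulOpposite.op r • e) ⊗ₜ[ℤ] f - e ⊗ₜ[ℤ] (r • f)}

/-- The tensor product `E ⊗_R F` of a right `R`-module `E` and a left `R`-module `F`
over a possibly noncommutative ring `R`, realized as a quotient of `E ⊗[ℤ] F`. -/
def ModTensor (R : Type u) [Ring R] (E F : Type u) [AddCommGroup E] [Module Rᵐᵒᵖ E]
    [AddCommGroup F] [Module R F] : Type u :=
  TensorProduct ℤ E F ⧸ balancedSub R E F

noncomputable instance (R : Type u) [Ring R] (E F : Type u) [AddCommGroup E] [Module Rᵐᵒᵖ E]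
    [AddCommGroup F] [Module R F] : AddCommGroup (ModTensor R E F) :=
  inferInstanceAs (AddCommGroup (TensorProduct ℤ E F ⧸ balancedSub R E F))

/-- The map `E ⊗_R F → E' ⊗_R F` induced by a map `g : E → E'` of right `R`-modules. -/
noncomputable def ModTensor.mapLeft (R : Type u) [Ring R] {E E' : Type u} [AddCommGroup E]
    [Module Rᵐᵒᵖ E] [AddCommGroup E'] [Module Rᵐᵒᵖ E'] (F : Type u) [AddCommGroup F]
    [Module R F] (g : E →ₗ[Rᵐᵒᵖ] E') : ModTensor R E F →ₗ[ℤ] ModTensor R E' F :=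
  Submodule.mapQ (balancedSub R E F) (balancedSub R E' F)
    (TensorProduct.map (g.restrictScalars ℤ) LinearMap.id)
    (by
      rw [balancedSub, Submodule.span_le]
      rintro x ⟨r, e, f, rfl⟩
      refine Submodule.subset_span ⟨r, g e, f, ?_⟩
      change TensorProduct.map (g.restrictScalars ℤ) LinearMap.id
        ((MulOpposite.op r • e) ⊗ₜ[ℤ] f - e ⊗ₜ[ℤ] (r • f)) = _
      simp [map_sub, TensorProduct.map_tmul, map_smul])

/-- The map `E ⊗_R F → E ⊗_R F'` induced by a map `f : F → F'` of left `R`-modules. -/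
noncomputable def ModTensor.mapRight (R : Type u) [Ring R] (E : Type u) [AddCommGroup E]
    [Module Rᵐᵒᵖ E] {F F' : Type u} [AddCommGroup F] [Module R F] [AddCommGroup F']
    [Module R F'] (f : F →ₗ[R] F') : ModTensor R E F →ₗ[ℤ] ModTensor R E F' :=
  Submodule.mapQ (balancedSub R E F) (balancedSub R E F')
    (TensorProduct.map LinearMap.id (f.restrictScalars ℤ))
    (by
      rw [balancedSub, Submodule.span_le]
      rintro x ⟨r, e, y, rfl⟩
      refine Submodule.subset_span ⟨r, e, f y, ?_⟩
      change TensorProduct.map LinearMap.id (f.restrictScalars ℤ)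
        ((MulOpposite.op r • e) ⊗ₜ[ℤ] y - e ⊗ₜ[ℤ] (r • y)) = _
      simp [map_sub, TensorProduct.map_tmul, map_smul])

/-- A left module `F` over a (possibly noncommutative) ring `R` is flat if tensoring
with `F` preserves injectivity of maps of right `R`-modules. -/
def IsFlatModule (R : Type u) [Ring R] (F : Type u) [AddCommGroup F] [Module R F] : Prop :=
  ∀ (E E' : Type u) [AddCommGroup E] [Module Rᵐᵒᵖ E] [AddCommGroup E'] [Module Rᵐᵒᵖ E']
    (g : E →ₗ[Rᵐᵒᵖ] E'), Function.Injective g →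
      Function.Injective (ModTensor.mapLeft R F g)

/-- `Ext^i_R(M, L) = 0`, expressed using the `Ext` functor on the category of left
`R`-modules (with its `ℤ`-linear structure). -/
def ExtIsZero (R : Type u) [Ring R] (i : ℕ) (M L : Type u) [AddCommGroup M] [Module R M]
    [AddCommGroup L] [Module R L] : Prop :=
  Subsingleton ((((_root_.Ext ℤ (ModuleCat.{u} R) i).obj
    (Opposite.op (ModuleCat.of R M))).obj (ModuleCat.of R L)) : Type u)

/-- `FlatDimLE R n L` means the left `R`-module `L` admits a flat resolution of
length at most `n`. -/
def FlatDimLE (R : Type u) [Ring R] : ℕ → ModuleCat.{u} R → Prop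
  | 0, L => IsFlatModule R L
  | n + 1, L =>
    ∃ (F K : ModuleCat.{u} R) (ι : (K : Type u) →ₗ[R] F) (π : (F : Type u) →ₗ[R] L),
      IsFlatModule R F ∧ Function.Injective ι ∧ Function.Surjective π ∧
      Function.Exact ι π ∧ FlatDimLE R n K

/-- A left `R`-module `L` has finite flat dimension if it admits a finite resolution
by flat modules. -/
def HasFiniteFlatDimension (R : Type u) [Ring R] (L : Type u) [AddCommGroup L]
    [Module R L] : Prop :=
  ∃ n : ℕ, FlatDimLE R n (ModuleCat.of R L)

/-- A left `R`-module `M` is Ding projective if there is an exact sequence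
`⋯ → P₁ → P₀ → P₋₁ → P₋₂ → ⋯` of projective modules with `M ≅ ker (P₀ → P₋₁)`
which stays exact under `Hom_R(-, F)` for every flat module `F`. -/
def IsDingProjective (R : Type u) [Ring R] (M : Type u) [AddCommGroup M] [Module R M] : Prop :=
  ∃ (P : ℤ → ModuleCat.{u} R) (d : ∀ n : ℤ, (P (n + 1) : Type u) →ₗ[R] P n),
    (∀ n, Module.Projective R (P n)) ∧
    (∀ n, Function.Exact (d (n + 1)) (d n)) ∧
    (∀ (F : Type u) [AddCommGroup F] [Module R F], IsFlatModule R F →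
      ∀ n : ℤ, Function.Exact
        (fun g : (P n : Type u) →ₗ[R] F => g ∘ₗ d n)
        (fun g : (P (n + 1) : Type u) →ₗ[R] F => g ∘ₗ d (n + 1))) ∧
    Nonempty (M ≃ₗ[R] LinearMap.ker (d (-1)))

/-- A left `R`-module `M` is two-degree Ding projective if there is an exact sequence
`⋯ → D₁ → D₀ → D₋₁ → D₋₂ → ⋯` of Ding projective modules with `M ≅ ker (D₀ → D₋₁)`
which stays exact under `Hom_R(-, F)` for every flat module `F`. -/
def IsTwoDegreeDingProjective (R : Type u) [Ring R] (M : Type u) [AddCommGroup M]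
    [Module R M] : Prop :=
  ∃ (D : ℤ → ModuleCat.{u} R) (d : ∀ n : ℤ, (D (n + 1) : Type u) →ₗ[R] D n),
    (∀ n, IsDingProjective R (D n)) ∧
    (∀ n, Function.Exact (d (n + 1)) (d n)) ∧
    (∀ (F : Type u) [AddCommGroup F] [Module R F], IsFlatModule R F →
      ∀ n : ℤ, Function.Exact
        (fun g : (D n : Type u) →ₗ[R] F => g ∘ₗ d n)
        (fun g : (D (n + 1) : Type u) →ₗ[R] F => g ∘ₗ d (n + 1))) ∧
    Nonempty (M ≃ₗ[R] LinearMap.ker (d (-1)))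

/-- A left `R`-module `M` is strongly two-degree Ding projective if there is an exact
sequence `⋯ →f D →f D →f D →f ⋯` with `D` Ding projective and a single map `f`, with
`M ≅ ker f`, which stays exact under `Hom_R(-, F)` for every flat module `F`. -/
def IsStronglyTwoDegreeDingProjective (R : Type u) [Ring R] (M : Type u) [AddCommGroup M]
    [Module R M] : Prop :=
  ∃ (D : ModuleCat.{u} R) (f : (D : Type u) →ₗ[R] D),
    IsDingProjective R D ∧
    Function.Exact f f ∧
    (∀ (F : Type u) [AddCommGroup F] [Module R F], IsFlatModule R F →
      Function.Exact
        (fun g : (D : Type u) →ₗ[R] F => g ∘ₗ f)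
        (fun g : (D : Type u) →ₗ[R] F => g ∘ₗ f)) ∧
    Nonempty (M ≃ₗ[R] LinearMap.ker f)

/-- A left `R`-module `M` is Gorenstein projective if there is an exact sequence
`⋯ → P₁ → P₀ → P₋₁ → P₋₂ → ⋯` of projective modules with `M ≅ ker (P₀ → P₋₁)`
which stays exact under `Hom_R(-, Q)` for every projective module `Q`. -/
def IsGorensteinProjective (R : Type u) [Ring R] (M : Type u) [AddCommGroup M]
    [Module R M] : Prop :=
  ∃ (P : ℤ → ModuleCat.{u} R) (d : ∀ n : ℤ, (P (n + 1) : Type u) →ₗ[R] P n),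
    (∀ n, Module.Projective R (P n)) ∧
    (∀ n, Function.Exact (d (n + 1)) (d n)) ∧
    (∀ (Q : Type u) [AddCommGroup Q] [Module R Q], Module.Projective R Q →
      ∀ n : ℤ, Function.Exact
        (fun g : (P n : Type u) →ₗ[R] Q => g ∘ₗ d n)
        (fun g : (P (n + 1) : Type u) →ₗ[R] Q => g ∘ₗ d (n + 1))) ∧
    Nonempty (M ≃ₗ[R] LinearMap.ker (d (-1)))

/-- A left `R`-module `H` is Gorenstein flat if there is an exact sequence
`⋯ → F₁ → F₀ → F₋₁ → F₋₂ → ⋯` of flat modules with `H ≅ ker (F₀ → F₋₁)` which stays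
exact under `E ⊗_R -` for every injective right `R`-module `E`. -/
def IsGorensteinFlat (R : Type u) [Ring R] (H : Type u) [AddCommGroup H] [Module R H] : Prop :=
  ∃ (F : ℤ → ModuleCat.{u} R) (d : ∀ n : ℤ, (F (n + 1) : Type u) →ₗ[R] F n),
    (∀ n, IsFlatModule R (F n)) ∧
    (∀ n, Function.Exact (d (n + 1)) (d n)) ∧
    (∀ (E : Type u) [AddCommGroup E] [Module Rᵐᵒᵖ E], Module.Injective Rᵐᵒᵖ E →
      ∀ n : ℤ, Function.Exact
        (ModTensor.mapRight R E (d (n + 1)))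
        (ModTensor.mapRight R E (d n))) ∧
    Nonempty (H ≃ₗ[R] LinearMap.ker (d (-1)))

/-- A left `R`-module `E` is FP-injective if `Ext¹_R(F, E) = 0` for every finitely
presented module `F`. -/
def IsFPInjective (R : Type u) [Ring R] (E : Type u) [AddCommGroup E] [Module R E] : Prop :=
  ∀ (F : Type u) [AddCommGroup F] [Module R F], Module.FinitePresentation R F →
    ExtIsZero R 1 F E

/-- A left `R`-module `M` is Ding injective if there is an exact sequence
`⋯ → E₁ → E₀ → E₋₁ → E₋₂ → ⋯` of injective modules with `M ≅ ker (E₀ → E₋₁)`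
which stays exact under `Hom_R(H, -)` for every FP-injective module `H`. -/
def IsDingInjective (R : Type u) [Ring R] (M : Type u) [AddCommGroup M] [Module R M] : Prop :=
  ∃ (E : ℤ → ModuleCat.{u} R) (d : ∀ n : ℤ, (E (n + 1) : Type u) →ₗ[R] E n),
    (∀ n, Module.Injective R (E n)) ∧
    (∀ n, Function.Exact (d (n + 1)) (d n)) ∧
    (∀ (H : Type u) [AddCommGroup H] [Module R H], IsFPInjective R H →
      ∀ n : ℤ, Function.Exact
        (fun g : H →ₗ[R] (E (n + 1 + 1) : Type u) => d (n + 1) ∘ₗ g)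
        (fun g : H →ₗ[R] (E (n + 1) : Type u) => d n ∘ₗ g)) ∧
    Nonempty (M ≃ₗ[R] LinearMap.ker (d (-1)))

/-- A left `R`-module `M` is two-degree Ding injective if there is an exact sequence
`⋯ → D₁ → D₀ → D₋₁ → D₋₂ → ⋯` of Ding injective modules with `M ≅ ker (D₀ → D₋₁)`
which stays exact under `Hom_R(H, -)` for every FP-injective module `H`. -/
def IsTwoDegreeDingInjective (R : Type u) [Ring R] (M : Type u) [AddCommGroup M]
    [Module R M] : Prop :=
  ∃ (D : ℤ → ModuleCat.{u} R) (d : ∀ n : ℤ, (D (n + 1) : Type u) →ₗ[R] D n),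
    (∀ n, IsDingInjective R (D n)) ∧
    (∀ n, Function.Exact (d (n + 1)) (d n)) ∧
    (∀ (H : Type u) [AddCommGroup H] [Module R H], IsFPInjective R H →
      ∀ n : ℤ, Function.Exact
        (fun g : H →ₗ[R] (D (n + 1 + 1) : Type u) => d (n + 1) ∘ₗ g)
        (fun g : H →ₗ[R] (D (n + 1) : Type u) => d n ∘ₗ g)) ∧
    Nonempty (M ≃ₗ[R] LinearMap.ker (d (-1)))

/-- A linear map vanishing on the kernel of a surjection factors through it. -/
lemma factor_through_surjective {R A B F : Type*} [Ring R] [AddCommGroup A] [Module R A]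
    [AddCommGroup B] [Module R B] [AddCommGroup F] [Module R F]
    (π : A →ₗ[R] B) (hπ : Function.Surjective π) (g : A →ₗ[R] F)
    (h0 : ∀ x, π x = 0 → g x = 0) : ∃ h : B →ₗ[R] F, h ∘ₗ π = g := by
  have hle : LinearMap.ker π ≤ LinearMap.ker g := fun x hx => h0 x hx
  let q : (A ⧸ LinearMap.ker π) →ₗ[R] F := (LinearMap.ker π).liftQ g hle
  let e : (A ⧸ LinearMap.ker π) ≃ₗ[R] B := π.quotKerEquivOfSurjective hπ
  refine ⟨q ∘ₗ e.symm.toLinearMap, ?_⟩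
  ext x
  obtain ⟨x', hx'⟩ := Submodule.Quotient.mk_surjective _ (e.symm (π x))
  have he : e (Submodule.Quotient.mk x') = π x := by rw [hx', e.apply_symm_apply]
  have hx : π x' = π x := he
  have : g x' = g x := by
    have : x' - x ∈ LinearMap.ker π := by simp [LinearMap.mem_ker, map_sub, hx]
    have := hle this
    rw [LinearMap.mem_ker, map_sub, sub_eq_zero] at this
    exact this
  simp only [LinearMap.comp_apply, LinearEquiv.coe_coe]
  rw [← hx', Submodule.liftQ_apply, this]

/-- `M` is strongly two-degree Ding projective iff there is a short exact
sequence `0 → M → D → M → 0` with `D` Ding projective which stays exact under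
`Hom_R(-, F)` for every flat module `F`. -/
theorem strongly_twoDegree_ding_projective_iff_hom_flat_exact (R : Type u) [Ring R]
    (M : Type u) [AddCommGroup M] [Module R M] :
    IsStronglyTwoDegreeDingProjective R M ↔
      ∃ (D : ModuleCat.{u} R) (ι : M →ₗ[R] D) (π : (D : Type u) →ₗ[R] M),
        Function.Injective ι ∧ Function.Surjective π ∧ Function.Exact ι π ∧
        IsDingProjective R D ∧
        (∀ (F : Type u) [AddCommGroup F] [Module R F], IsFlatModule R F →
          Function.Injective (fun g : M →ₗ[R] F => g ∘ₗ π) ∧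
          Function.Exact
            (fun g : M →ₗ[R] F => g ∘ₗ π)
            (fun g : (D : Type u) →ₗ[R] F => g ∘ₗ ι) ∧
          Function.Surjective (fun g : (D : Type u) →ₗ[R] F => g ∘ₗ ι)) := by
  constructor
  · rintro ⟨D, f, hDing, hexact, hhom, ⟨e⟩⟩
    set ι : M →ₗ[R] (D : Type u) :=
      (LinearMap.ker f).subtype ∘ₗ (e : M →ₗ[R] LinearMap.ker f) with hιdef
    have hff : ∀ x : (D : Type u), f (f x) = 0 := fun x =>
      (hexact (f x)).mpr ⟨x, rfl⟩
    set f' : (D : Type u) →ₗ[R] LinearMap.ker f :=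
      f.codRestrict (LinearMap.ker f) (fun x => LinearMap.mem_ker.mpr (hff x)) with hf'def
    set π : (D : Type u) →ₗ[R] M :=
      (e.symm : LinearMap.ker f →ₗ[R] M) ∘ₗ f' with hπdef
    have hf'surj : Function.Surjective f' := by
      rintro ⟨y, hy⟩
      obtain ⟨x, hx⟩ := (hexact y).mp hy
      exact ⟨x, Subtype.ext hx⟩
    have hι : Function.Injective ι := by
      intro a b hab
      exact e.injective (Subtype.ext hab)
    have hπ : Function.Surjective π := fun m => by
      obtain ⟨x, hx⟩ := hf'surj (e m)
      exact ⟨x, by simp [hπdef, hx]⟩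
    have hrangeι : ∀ y : (D : Type u), y ∈ Set.range ι ↔ f y = 0 := by
      intro y
      constructor
      · rintro ⟨m, rfl⟩
        exact (e m).2
      · intro hy
        exact ⟨e.symm ⟨y, hy⟩, by simp [hιdef]⟩
    have hexactIπ : Function.Exact ι π := by
      intro y
      constructor
      · intro hy
        have h1 : f' y = 0 := e.symm.injective (by simpa [hπdef] using hy)
        have h2 : f y = 0 := congrArg Subtype.val h1
        exact (hrangeι y).mpr h2
      · intro hy
        have h1 : f y = 0 := (hrangeι y).mp hy
        have hf'y : f' y = 0 := Subtype.ext h1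
        simp [hπdef, hf'y]
    have hπι : ∀ m : M, π (ι m) = 0 := by
      intro m
      have h1 : f' (ι m) = 0 := Subtype.ext ((e m).2)
      simp [hπdef, h1]
    have hπf : ∀ d : (D : Type u), π (f d) = 0 := by
      intro d
      have h1 : f' (f d) = 0 := Subtype.ext (hff d)
      simp [hπdef, h1]
    refine ⟨D, ι, π, hι, hπ, hexactIπ, hDing, ?_⟩
    intro F _ _ hF
    refine ⟨?_, ?_, ?_⟩
    · -- injectivity of precomposition with surjective π
      intro g g' hgg'
      ext m
      obtain ⟨d, rfl⟩ := hπ m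
      exact LinearMap.congr_fun hgg' d
    · -- exactness
      intro g
      constructor
      · intro hg
        have h0 : ∀ x : (D : Type u), π x = 0 → g x = 0 := by
          intro x hx
          obtain ⟨m, rfl⟩ := (hexactIπ x).mp hx
          exact LinearMap.congr_fun hg m
        obtain ⟨h, hh⟩ := factor_through_surjective π hπ g h0
        exact ⟨h, hh⟩
      · rintro ⟨h, rfl⟩
        show (h ∘ₗ π) ∘ₗ ι = 0
        ext m
        simp [hπι m]
    · -- surjectivity of precomposition with ι, via flat homotopy exactness
      intro h
      have hg0 : (h ∘ₗ π) ∘ₗ f = 0 := by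
        ext d
        simp [hπf d]
      obtain ⟨g', hg'⟩ := (hhom F hF (h ∘ₗ π)).mp hg0
      have hg'' : g' ∘ₗ f = h ∘ₗ π := hg'
      refine ⟨g', ?_⟩
      show g' ∘ₗ ι = h
      ext m
      have hmem : f (ι m) = 0 := (e m).2
      obtain ⟨d, hd⟩ := (hexact (ι m)).mp hmem
      have h1 : g' (f d) = h (π d) := LinearMap.congr_fun hg'' d
      have h2 : π d = m := by
        have h3 : f' d = e m := Subtype.ext hd
        simp [hπdef, h3]
      show g' (ι m) = h m
      rw [← hd, h1, h2]
  · rintro ⟨D, ι, π, hι, hπ, hexact, hDing, hhom⟩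
    set f : (D : Type u) →ₗ[R] (D : Type u) := ι ∘ₗ π with hfdef
    have hπι : ∀ m : M, π (ι m) = 0 := fun m => (hexact (ι m)).mpr ⟨m, rfl⟩
    have hff : Function.Exact f f := by
      intro y
      constructor
      · intro hy
        have h1 : π y = 0 := hι (by simpa [hfdef] using hy)
        obtain ⟨m, rfl⟩ := (hexact y).mp h1
        obtain ⟨d, hd⟩ := hπ m
        exact ⟨d, by simp [hfdef, hd]⟩
      · rintro ⟨x, rfl⟩
        simp [hfdef, hπι]
    refine ⟨D, f, hDing, hff, ?_, ?_⟩
    · intro F _ _ hF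
      obtain ⟨hinj, hex, hsurj⟩ := hhom F hF
      intro g
      constructor
      · intro hg
        have hg' : g ∘ₗ f = 0 := hg
        have hgι : g ∘ₗ ι = (0 : M →ₗ[R] F) := by
          apply hinj
          show (g ∘ₗ ι) ∘ₗ π = (0 : M →ₗ[R] F) ∘ₗ π
          ext m
          have h1 : g (f m) = 0 := LinearMap.congr_fun hg' m
          simpa [hfdef] using h1
        obtain ⟨h, hh⟩ := (hex g).mp hgι
        have hh' : h ∘ₗ π = g := hh
        obtain ⟨g', hg''⟩ := hsurj h
        have hg''' : g' ∘ₗ ι = h := hg''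
        refine ⟨g', ?_⟩
        show g' ∘ₗ f = g
        ext d
        have h1 : g' (ι (π d)) = h (π d) := LinearMap.congr_fun hg''' (π d)
        have h2 : h (π d) = g d := LinearMap.congr_fun hh' d
        show g' (f d) = g d
        rw [hfdef]
        show g' (ι (π d)) = g d
        rw [h1, h2]
      · rintro ⟨g', rfl⟩
        show (g' ∘ₗ f) ∘ₗ f = 0
        ext d
        simp [hfdef, hπι]
    · -- M ≃ ker f
      have hkerf : LinearMap.range ι = LinearMap.ker f := by
        ext x
        simp only [LinearMap.mem_range, LinearMap.mem_ker, hfdef, LinearMap.comp_apply]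
        constructor
        · rintro ⟨m, rfl⟩
          rw [hπι m, map_zero]
        · intro hx
          have h1 : π x = 0 := hι (by simpa using hx)
          exact (hexact x).mp h1
      exact ⟨(LinearEquiv.ofInjective ι hι).trans (LinearEquiv.ofEq _ _ hkerf)⟩
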